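/- For every finite rooted tree T, the group Aut(T) is ambivalent: every g ∈ Aut(T) is conjugate in Aut(T) to its inverse g⁻¹. -/

import Mathlib

open Function

structure FRTree : Type 1 where
  V : Type
  [fintypeV : Fintype V]
  [decEqV : DecidableEq V]
  root : V
  parent : V → V
  parent_root : parent root = root
  reaches_root : ∀ v : V, ∃ n : ℕ, parent^[n] v = root

attribute [instance] FRTree.fintypeV FRTree.decEqV

namespace FRTree

/-- `w` is a child of `u`. -/
def IsChild (T : FRTree) (w u : T.V) : Prop := w ≠ T.root ∧ T.parent w = u

instance (T : FRTree) (w u : T.V) : Decidable (T.IsChild w u) :=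
  inferInstanceAs (Decidable (w ≠ T.root ∧ T.parent w = u))

/-- A vertex is internal if it has at least one child. -/
def Internal (T : FRTree) (u : T.V) : Prop := ∃ w, T.IsChild w u

/-- A leaf is a vertex without children. -/
def IsLeaf (T : FRTree) (u : T.V) : Prop := ¬ T.Internal u

/-- Two (non-root) vertices are siblings if they have the same parent. -/
def Siblings (T : FRTree) (u v : T.V) : Prop :=
  u ≠ T.root ∧ v ≠ T.root ∧ T.parent u = T.parent v

/-- The set of vertices of the subtree `T_u`:  `u` together with all of its descendants. -/
def Desc (T : FRTree) (u : T.V) : Set T.V := {v | ∃ n : ℕ, T.parent^[n] v = u}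

/-- First level vertices. -/
def FirstLevel (T : FRTree) (v : T.V) : Prop := v ≠ T.root ∧ T.parent v = T.root

/-- The children of a vertex, as a finset. -/
def children (T : FRTree) (u : T.V) : Finset T.V :=
  Finset.univ.filter (fun w => T.IsChild w u)

end FRTree

open FRTree

/-- Rooted tree homomorphism: sends root to root, non-root vertices to non-root
vertices and commutes with taking the parent.  (This is the same as a graph
homomorphism between the underlying trees sending root to root.) -/
def IsHom (T P : FRTree) (φ : T.V → P.V) : Prop :=
  φ T.root = P.root ∧
  ∀ v : T.V, v ≠ T.root → φ v ≠ P.root ∧ P.parent (φ v) = φ (T.parent v)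

/-- Isomorphism of rooted trees. -/
def IsIsom (T P : FRTree) (φ : T.V → P.V) : Prop :=
  IsHom T P φ ∧ Function.Bijective φ

/-- The automorphism group of a rooted tree, as a subgroup of the permutations of the vertices. -/
def FRTree.Aut (T : FRTree) : Subgroup (Equiv.Perm T.V) where
  carrier := {g : Equiv.Perm T.V | IsHom T T ⇑g}
  one_mem' := ⟨rfl, fun v hv => ⟨hv, rfl⟩⟩
  mul_mem' := by
    rintro a b ⟨ha0, ha⟩ ⟨hb0, hb⟩
    refine ⟨?_, fun v hv => ?_⟩
    · simp only [Equiv.Perm.coe_mul, Function.comp_apply, hb0, ha0]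
    · obtain ⟨hb1, hb2⟩ := hb v hv
      obtain ⟨ha1, ha2⟩ := ha (b v) hb1
      refine ⟨by simpa using ha1, ?_⟩
      simp only [Equiv.Perm.coe_mul, Function.comp_apply]
      rw [ha2, hb2]
  inv_mem' := by
    rintro a ⟨ha0, ha⟩
    refine ⟨a.injective (by simp [ha0]), fun v hv => ?_⟩
    have h1 : a⁻¹ v ≠ T.root := by
      intro h
      apply hv
      have h2 := congrArg a h
      rwa [Equiv.Perm.inv_def, Equiv.apply_symm_apply, ha0] at h2
    obtain ⟨_, h3⟩ := ha (a⁻¹ v) h1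
    rw [Equiv.Perm.inv_def, Equiv.apply_symm_apply] at h3
    exact ⟨h1, a.injective (by rw [Equiv.Perm.inv_def, Equiv.apply_symm_apply, ← h3])⟩

/-- `τ` restricts to an isomorphism from the subtree `T_u` onto the subtree `T'_{u'}`.
(The values of `τ` outside of `T_u` are irrelevant.) -/
def IsSubtreeIso (T T' : FRTree) (u : T.V) (u' : T'.V) (τ : T.V → T'.V) : Prop :=
  τ u = u' ∧ Set.BijOn τ (T.Desc u) (T'.Desc u') ∧
  ∀ w ∈ T.Desc u, w ≠ u → τ w ≠ u' ∧ T'.parent (τ w) = τ (T.parent w)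

/-- A tree composition (`P`-composition of `T`): a surjective rooted tree homomorphism
satisfying the regularity condition. -/
def IsComposition (T P : FRTree) (φ : T.V → P.V) : Prop :=
  IsHom T P φ ∧ Function.Surjective φ ∧
  ∀ u v : T.V, u ≠ v → T.Internal u → T.Internal v → T.Siblings u v → φ u = φ v →
    ∃ g ∈ T.Aut, g u = v ∧ ∀ w ∈ T.Desc u, φ (g w) = φ w
/-- Equivalence of the restrictions `φ_u : T_u → P_{φ u}` and `ψ_{u'} : T'_{u'} → P'_{ψ u'}`
of two tree compositions. -/
def RestrEquiv (T P T' P' : FRTree) (φ : T.V → P.V) (ψ : T'.V → P'.V)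
    (u : T.V) (u' : T'.V) : Prop :=
  ∃ (τ : T.V → T'.V) (ω : P.V → P'.V),
    IsSubtreeIso T T' u u' τ ∧ IsSubtreeIso P P' (φ u) (ψ u') ω ∧
    ∀ w ∈ T.Desc u, ω (φ w) = ψ (τ w)

/-- Strict equivalence of the restrictions `δ_u : T_u → Q_{δ u}` and
`δ'_{u'} : T'_{u'} → Q_{δ' u'}` of two maps into the same tree `Q`
(the isomorphism on the target side is the identity). -/
def RestrStrictEquiv (T Q T' : FRTree) (δ : T.V → Q.V) (δ' : T'.V → Q.V)
    (u : T.V) (u' : T'.V) : Prop :=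
  δ u = δ' u' ∧ ∃ τ : T.V → T'.V, IsSubtreeIso T T' u u' τ ∧
    ∀ w ∈ T.Desc u, δ' (τ w) = δ w

/-- Equivalence of tree compositions. -/
def CompEquiv (T P T' P' : FRTree) (φ : T.V → P.V) (ψ : T'.V → P'.V) : Prop :=
  ∃ (τ : T.V → T'.V) (ω : P.V → P'.V),
    IsIsom T T' τ ∧ IsIsom P P' ω ∧ ω ∘ φ = ψ ∘ τ

/-- Strict equivalence of tree compositions with the same target tree. -/
def StrictEquiv (T T' P : FRTree) (φ : T.V → P.V) (ψ : T'.V → P.V) : Prop :=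
  ∃ τ : T.V → T'.V, IsIsom T T' τ ∧ ψ ∘ τ = φ

/-- `α : P → Q` is the quotient of the tree composition `φ : T → P`. -/
def IsQuotient (T P Q : FRTree) (φ : T.V → P.V) (α : P.V → Q.V) : Prop :=
  IsComposition P Q α ∧
  -- (a) for every internal `x ∈ P`, all children of `x` which are leaves are sent by `α`
  -- to a single vertex, which is the unique child of `α x` that is a leaf
  (∀ x : P.V, P.Internal x → ∀ y y' : P.V, P.IsChild y x → P.IsLeaf y →
    P.IsChild y' x → P.IsLeaf y' → α y = α y') ∧
  (∀ x y : P.V, P.Internal x → P.IsChild y x → P.IsLeaf y →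
    Q.IsChild (α y) (α x) ∧ Q.IsLeaf (α y) ∧
      ∀ z : Q.V, Q.IsChild z (α x) → Q.IsLeaf z → z = α y) ∧
  -- (b) distinct internal siblings of `Q` separate inequivalent restrictions of `φ`
  (∀ a b : Q.V, a ≠ b → Q.Internal a → Q.Internal b → Q.Siblings a b →
    ∀ u v : T.V, α (φ u) = a → α (φ v) = b → ¬ RestrEquiv T P T P φ φ u v) ∧
  -- (c) vertices with the same image under `α ∘ φ` have equivalent restrictions of `φ`,
  -- and strictly equivalent restrictions of `α ∘ φ`
  (∀ u w : T.V, T.Internal u → T.Internal w → α (φ u) = α (φ w) →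
    RestrEquiv T P T P φ φ u w ∧ RestrStrictEquiv T Q T (α ∘ φ) (α ∘ φ) u w)

/-- The type `|φ⁻¹|` of a tree composition: `|φ⁻¹|(root) = 0` and, for `y` non-root with
parent `x`, `|φ⁻¹|(y) = |φ⁻¹(y) ∩ Ch(u)|` where `u` is any vertex with `φ u = x` (for a tree
composition this number does not depend on the choice of `u`, so it equals the `sSup` below). -/
noncomputable def typeOf (T P : FRTree) (φ : T.V → P.V) (y : P.V) : ℕ :=
  if y = P.root then 0
  else sSup {n : ℕ | ∃ u : T.V, φ u = P.parent y ∧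
    n = (Finset.univ.filter (fun w => T.IsChild w u ∧ φ w = y)).card}

/-- The partition `λ^b` associated to a non-root vertex `b` of the quotient tree:
the multiset of the numbers `|φ⁻¹|(y)`, for `y` ranging over the children of `x`
with `α y = b` (where `x` is any vertex of `P` with `α x = ` parent of `b`). -/
noncomputable def assocPartition (T P Q : FRTree) (φ : T.V → P.V) (α : P.V → Q.V)
    (x : P.V) (b : Q.V) : Multiset ℕ :=
  ((Finset.univ.filter (fun y => P.IsChild y x ∧ α y = b)).val).map (typeOf T P φ)

/-- `Λ` is the partitional labeling of the quotient tree `Q` associated to the tree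
composition `φ : T → P` (with quotient map `α : P → Q`). -/
def IsAssocLabeling (T P Q : FRTree) (φ : T.V → P.V) (α : P.V → Q.V)
    (Λ : Q.V → Multiset ℕ) : Prop :=
  IsQuotient T P Q φ α ∧
  ∀ b : Q.V, b ≠ Q.root → ∀ x : P.V, α x = Q.parent b →
    Λ b = assocPartition T P Q φ α x b

/-- A partitional labeling: every non-root vertex is labeled by an integer partition
(a multiset of positive integers). -/
def IsPartitionalLabeling (Q : FRTree) (Λ : Q.V → Multiset ℕ) : Prop :=
  ∀ a : Q.V, a ≠ Q.root → ∀ n ∈ Λ a, 0 < n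

/-- Isomorphism of the restrictions of two partitional labelings to the subtrees `Q_a` and
`Q'_b`, the roots `a`, `b` being regarded as unlabeled. -/
def LabelRestrIso (Q Q' : FRTree) (Λ : Q.V → Multiset ℕ) (Ξ : Q'.V → Multiset ℕ)
    (a : Q.V) (b : Q'.V) : Prop :=
  ∃ γ : Q.V → Q'.V, IsSubtreeIso Q Q' a b γ ∧
    ∀ c ∈ Q.Desc a, c ≠ a → Λ c = Ξ (γ c)

/-- A tree of partitions. -/
def IsTreeOfPartitions (Q : FRTree) (Λ : Q.V → Multiset ℕ) : Prop :=
  IsPartitionalLabeling Q Λ ∧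
  (∀ x y y' : Q.V, Q.IsChild y x → Q.IsLeaf y → Q.IsChild y' x → Q.IsLeaf y' → y = y') ∧
  (∀ a b : Q.V, a ≠ b → Q.Internal a → Q.Internal b → Q.Siblings a b →
    ¬ LabelRestrIso Q Q Λ Λ a b)

/-- Isomorphism of partitional labelings. -/
def LabelIso (Q Q' : FRTree) (Λ : Q.V → Multiset ℕ) (Ξ : Q'.V → Multiset ℕ) : Prop :=
  ∃ γ : Q.V → Q'.V, IsIsom Q Q' γ ∧ ∀ a : Q.V, a ≠ Q.root → Λ a = Ξ (γ a)

/-- `δ : T → Q` is a realization of the tree of partitions `(Λ, Q)` as a tree of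
partitions of `T`. -/
def IsRealization (T Q : FRTree) (Λ : Q.V → Multiset ℕ) (δ : T.V → Q.V) : Prop :=
  IsComposition T Q δ ∧
  ∀ a : Q.V, Q.Internal a → ∀ u : T.V, δ u = a →
    ∑ b ∈ Q.children a, (Λ b).sum = (T.children u).card

/-- `(Λ, Q)` belongs to `Par(T)`. -/
def InParT (T Q : FRTree) (Λ : Q.V → Multiset ℕ) : Prop :=
  IsTreeOfPartitions Q Λ ∧ ∃ δ : T.V → Q.V, IsRealization T Q Λ δ

/-- The compatibility condition on `α : P → Q` entering the definition of `Par(T, P)`: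
at every vertex of `α⁻¹(a)` the numbers of children is the sum of the lengths of the
partitions labeling the children of `a`. -/
def LengthCond (P Q : FRTree) (Λ : Q.V → Multiset ℕ) (α : P.V → Q.V) : Prop :=
  ∀ a : Q.V, Q.Internal a → ∀ x : P.V, α x = a →
    ∑ b ∈ Q.children a, Multiset.card (Λ b) = (P.children x).card

/-- `(Λ, Q)` belongs to `Par(T, P)`. -/
def InParTP (T P Q : FRTree) (Λ : Q.V → Multiset ℕ) : Prop :=
  InParT T Q Λ ∧ ∃ α : P.V → Q.V, IsComposition P Q α ∧ LengthCond P Q Λ α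
/-- A common refinement of the tree compositions `φ : T → P` and `ψ : T → M`. -/
def IsCommonRefinement (T P M R : FRTree) (φ : T.V → P.V) (ψ : T.V → M.V)
    (ρ : T.V → R.V) (ϑ : R.V → P.V) (τ : R.V → M.V) : Prop :=
  IsComposition T R ρ ∧ IsComposition R P ϑ ∧ IsComposition R M τ ∧
  ϑ ∘ ρ = φ ∧ τ ∘ ρ = ψ

/-- Equivalence of the restricted common refinements `ρ_u` (of `(φ_u, ψ_u)`) and
`ρ_v` (of `(φ_v, ψ_v)`), where `ρ u = a`, `ρ v = b`, `ϑ a = ϑ b` and `τ a = τ b`. -/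
def RestrRefEquiv (T P M R : FRTree) (φ : T.V → P.V) (ψ : T.V → M.V)
    (ρ : T.V → R.V) (ϑ : R.V → P.V) (τ : R.V → M.V)
    (u v : T.V) (a b : R.V) : Prop :=
  ∃ (ζ : T.V → T.V) (γ : R.V → R.V),
    IsSubtreeIso T T u v ζ ∧ IsSubtreeIso R R a b γ ∧
    (∀ w ∈ T.Desc u, φ (ζ w) = φ w) ∧
    (∀ w ∈ T.Desc u, ψ (ζ w) = ψ w) ∧
    (∀ w ∈ T.Desc u, ρ (ζ w) = γ (ρ w)) ∧
    (∀ r ∈ R.Desc a, ϑ (γ r) = ϑ r) ∧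
    (∀ r ∈ R.Desc a, τ (γ r) = τ r)

/-- The coarseness condition for a common refinement. -/
def Coarseness (T P M R : FRTree) (φ : T.V → P.V) (ψ : T.V → M.V)
    (ρ : T.V → R.V) (ϑ : R.V → P.V) (τ : R.V → M.V) : Prop :=
  (∀ a b : R.V, a ≠ b → R.Internal a → R.Internal b → R.Siblings a b →
    ϑ a = ϑ b → τ a = τ b →
    ∀ u v : T.V, ρ u = a → ρ v = b →
      ¬ RestrRefEquiv T P M R φ ψ ρ ϑ τ u v a b) ∧
  (∀ a b : R.V, a ≠ b → R.IsLeaf a → R.IsLeaf b → R.Siblings a b →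
    ¬ (ϑ a = ϑ b ∧ τ a = τ b))

/-- Equivalence of two common refinements of the same couple `(φ, ψ)` of tree
compositions of `T`. -/
def RefEquiv (T P M R R' : FRTree) (φ : T.V → P.V) (ψ : T.V → M.V)
    (ρ : T.V → R.V) (ϑ : R.V → P.V) (τ : R.V → M.V)
    (ρ' : T.V → R'.V) (ϑ' : R'.V → P.V) (τ' : R'.V → M.V) : Prop :=
  ∃ (ζ : T.V → T.V) (γ : R.V → R'.V),
    IsIsom T T ζ ∧ IsIsom R R' γ ∧
    φ ∘ ζ = φ ∧ ψ ∘ ζ = ψ ∧ ρ' ∘ ζ = γ ∘ ρ ∧ ϑ' ∘ γ = ϑ ∧ τ' ∘ γ = τ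

/-- The orbit of the tree composition `φ` under the action `g • φ = φ ∘ g⁻¹` of `Aut T`. -/
def OrbitSet (T P : FRTree) (φ : T.V → P.V) : Type :=
  {ψ : T.V → P.V // ∃ g ∈ T.Aut, ψ = φ ∘ ⇑g⁻¹}

/-- The action of `Aut T` on the orbit of `φ`. -/
def orbAct (T P : FRTree) (φ : T.V → P.V) (g : T.Aut)
    (ψ : OrbitSet T P φ) : OrbitSet T P φ :=
  ⟨ψ.1 ∘ ⇑((g : Equiv.Perm T.V))⁻¹, by
    obtain ⟨h, hh, hψ⟩ := ψ.2
    refine ⟨(g : Equiv.Perm T.V) * h, mul_mem g.2 hh, ?_⟩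
    rw [hψ]
    funext x
    simp [Function.comp, mul_inv_rev]⟩

/-- The permutation representation `M^{|φ⁻¹|}` of `Aut T` on the (complex functions on
the) orbit of the tree composition `φ`. -/
noncomputable def permRep (T P : FRTree) (φ : T.V → P.V) :
    Representation ℂ (T.Aut) (OrbitSet T P φ → ℂ) where
  toFun g :=
    { toFun := fun F ψ => F (orbAct T P φ g⁻¹ ψ)
      map_add' := fun _ _ => rfl
      map_smul' := fun _ _ => rfl }
  map_one' := by
    refine LinearMap.ext fun F => funext fun ψ => ?_
    show F (orbAct T P φ 1⁻¹ ψ) = F ψ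
    have h : orbAct T P φ 1⁻¹ ψ = ψ := Subtype.ext (funext fun x => by simp [orbAct])
    rw [h]
  map_mul' := by
    intro a b
    refine LinearMap.ext fun F => funext fun ψ => ?_
    show F (orbAct T P φ (a * b)⁻¹ ψ) = F (orbAct T P φ b⁻¹ (orbAct T P φ a⁻¹ ψ))
    have h : orbAct T P φ (a * b)⁻¹ ψ = orbAct T P φ b⁻¹ (orbAct T P φ a⁻¹ ψ) :=
      Subtype.ext (funext fun x => by simp [orbAct, mul_inv_rev])
    rw [h]

/-- Equivalence of two representations. -/
def RepEquiv {G : Type*} [Group G] {V W : Type*}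
    [AddCommGroup V] [Module ℂ V] [AddCommGroup W] [Module ℂ W]
    (ρ : Representation ℂ G V) (σ : Representation ℂ G W) : Prop :=
  ∃ e : V ≃ₗ[ℂ] W, ∀ (g : G) (v : V), e (ρ g v) = σ g (e v)

/-- Irreducibility of a representation. -/
def IsIrreducibleRep {G V : Type*} [Group G] [AddCommGroup V] [Module ℂ V]
    (ρ : Representation ℂ G V) : Prop :=
  (∃ v : V, v ≠ 0) ∧
  ∀ U : Submodule ℂ V, (∀ g : G, ∀ v ∈ U, ρ g v ∈ U) → U = ⊥ ∨ U = ⊤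

/-- The space of equivariant linear maps between two representations; when `ρ` is
irreducible, its dimension is the multiplicity of `ρ` in `σ`. -/
def equivariantHoms {G : Type*} [Group G] {V W : Type*}
    [AddCommGroup V] [Module ℂ V] [AddCommGroup W] [Module ℂ W]
    (ρ : Representation ℂ G V) (σ : Representation ℂ G W) :
    Submodule ℂ (V →ₗ[ℂ] W) where
  carrier := {f | ∀ (g : G) (v : V), f (ρ g v) = σ g (f v)}
  add_mem' := by
    intro a b ha hb g v
    simp [ha g v, hb g v]
  zero_mem' := by intro g v; simp
  smul_mem' := by
    intro c f hf g v
    simp [hf g v]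

/-- The stabilizer `K_φ` of a tree composition `φ` in `Aut T`. -/
def stab (T P : FRTree) (φ : T.V → P.V) : Subgroup (T.Aut) where
  carrier := {g | ∀ x : T.V, φ ((g : Equiv.Perm T.V) x) = φ x}
  one_mem' := fun _ => rfl
  mul_mem' := by
    intro a b ha hb x
    simp only [Subgroup.coe_mul, Equiv.Perm.mul_apply]
    rw [ha ((b : Equiv.Perm T.V) x), hb x]
  inv_mem' := by
    intro a ha x
    have := ha (((a : Equiv.Perm T.V))⁻¹ x)
    simp only [Equiv.Perm.inv_def, Equiv.apply_symm_apply] at this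
    simpa using this.symm

/-- The space of the representation of `G` induced by the character `χ` of the
subgroup `K`: complex functions on `G` which are `χ`-covariant for right translation
by `K`; `G` acts by left translation. -/
noncomputable def IndSpace (G : Type*) [Group G] (K : Subgroup G) (χ : K →* ℂ) :
    Submodule ℂ (G → ℂ) where
  carrier := {f | ∀ (g : G) (k : K), f (g * k) = χ k * f g}
  add_mem' := by
    intro a b ha hb g k
    simp only [Pi.add_apply, ha g k, hb g k]
    ring
  zero_mem' := by intro g k; simp
  smul_mem' := by
    intro c f hf g k
    simp only [Pi.smul_apply, smul_eq_mul, hf g k]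
    ring

/-- The representation of `G` induced by the character `χ` of the subgroup `K`. -/
noncomputable def indRep (G : Type*) [Group G] (K : Subgroup G) (χ : K →* ℂ) :
    Representation ℂ G (IndSpace G K χ) where
  toFun g :=
    { toFun := fun f => ⟨fun x => (f : G → ℂ) (g⁻¹ * x), by
        intro x k
        have h := f.2 (g⁻¹ * x) k
        simpa [mul_assoc] using h⟩
      map_add' := by intro a b; apply Subtype.ext; funext x; rfl
      map_smul' := by intro c a; apply Subtype.ext; funext x; rfl }
  map_one' := by
    refine LinearMap.ext fun f => Subtype.ext (funext fun x => ?_)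
    simp
  map_mul' := by
    intro a b
    refine LinearMap.ext fun f => Subtype.ext (funext fun x => ?_)
    simp [mul_assoc]

/-- A sibling swap: an automorphism of order two exchanging the subtrees rooted at two
distinct siblings `u`, `v` and fixing everything else.  The sign representation of
`Aut T` is the unique homomorphism `Aut T →* ℂ` taking the value `-1` at every
sibling swap. -/
def IsSiblingSwap (T : FRTree) (g : Equiv.Perm T.V) : Prop :=
  ∃ u v : T.V, u ≠ v ∧ T.Siblings u v ∧ g u = v ∧
    (∀ w : T.V, w ∉ T.Desc u → w ∉ T.Desc v → g w = w) ∧ g * g = 1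

/-- The conjugate (transpose) of an integer partition, encoded as a multiset. -/
def conjP (m : Multiset ℕ) : Multiset ℕ :=
  ((Multiset.range m.sum).map fun i => Multiset.card (m.filter fun p => i < p)).filter
    fun n => 0 < n

/-- Two tree compositions of the same tree have `0-1` intersection. -/
def ZeroOneIntersection (T P M : FRTree) (φ : T.V → P.V) (ψ : T.V → M.V) : Prop :=
  ∀ v : T.V, T.Internal v → ∀ x : P.V, ∀ y : M.V,
    P.IsChild x (φ v) → M.IsChild y (ψ v) →
    {w : T.V | φ w = x ∧ ψ w = y}.Subsingleton

/-- `φᵗ : T → Pᵗ` (with quotient `αᵗ`) is a transpose of the tree composition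
`φ : T → P` with quotient `α : P → Q` and associated tree of partitions `Λ`. -/
def IsTranspose (T P Q Pt : FRTree) (φ : T.V → P.V) (α : P.V → Q.V)
    (Λ : Q.V → Multiset ℕ) (φt : T.V → Pt.V) (αt : Pt.V → Q.V) : Prop :=
  IsComposition T Pt φt ∧
  IsAssocLabeling T Pt Q φt αt (fun a => conjP (Λ a)) ∧
  (αt ∘ φt = α ∘ φ) ∧
  ZeroOneIntersection T P Pt φ φt

set_option synthInstance.maxHeartbeats 400000 in
/-- The multiplicity of the irreducible representation `ρ` inside `σ`: the dimension of
the space of equivariant linear maps. -/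
noncomputable def repMultiplicity {G : Type*} [Group G] {V W : Type*}
    [AddCommGroup V] [Module ℂ V] [AddCommGroup W] [Module ℂ W]
    (ρ : Representation ℂ G V) (σ : Representation ℂ G W) : ℕ :=
  Module.finrank ℂ ↥(equivariantHoms ρ σ)

namespace AmbivAux

open FRTree

variable {T : FRTree}

lemma root_iterate (n : ℕ) : T.parent^[n] T.root = T.root := by
  induction n with
  | zero => rfl
  | succ n ih => rw [Function.iterate_succ_apply', ih, T.parent_root]

lemma no_cycle {v : T.V} (hv : v ≠ T.root) {n : ℕ} (h : T.parent^[n] v = v) : n = 0 := by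
  by_contra hn
  obtain ⟨m, hm⟩ := T.reaches_root v
  have hiter : ∀ k : ℕ, T.parent^[k * n] v = v := by
    intro k; induction k with
    | zero => simp
    | succ k ih => rw [Nat.succ_mul, Function.iterate_add_apply, h, ih]
  have h1 : T.parent^[(m+1) * n] v = v := hiter (m+1)
  have h2 : (m+1) * n = ((m+1) * n - m) + m := by
    have : m ≤ (m+1) * n := by
      have : 1 ≤ n := Nat.one_le_iff_ne_zero.mpr hn
      calc m ≤ m + 1 := Nat.le_succ m
        _ = (m+1) * 1 := (mul_one _).symm
        _ ≤ (m+1) * n := Nat.mul_le_mul_left _ this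
    omega
  rw [h2, Function.iterate_add_apply, hm, root_iterate] at h1
  exact hv h1.symm

lemma mem_desc_self (u : T.V) : u ∈ T.Desc u := ⟨0, rfl⟩

lemma desc_root : T.Desc T.root = Set.univ := by
  ext v; simp only [Set.mem_univ, iff_true]
  exact T.reaches_root v

lemma child_closed {u x : T.V} (h : T.parent x ∈ T.Desc u) : x ∈ T.Desc u := by
  obtain ⟨n, hn⟩ := h
  exact ⟨n + 1, by rwa [Function.iterate_succ_apply]⟩

lemma desc_mono {u w : T.V} (h : w ∈ T.Desc u) : T.Desc w ⊆ T.Desc u := by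
  rintro x ⟨n, hn⟩
  obtain ⟨m, hm⟩ := h
  exact ⟨m + n, by rw [Function.iterate_add_apply, hn, hm]⟩

lemma root_mem_desc {u : T.V} (h : T.root ∈ T.Desc u) : u = T.root := by
  obtain ⟨n, hn⟩ := h
  rw [root_iterate] at hn; exact hn.symm

lemma parent_mem_desc {u x : T.V} (h : x ∈ T.Desc u) (hx : x ≠ u) :
    T.parent x ∈ T.Desc u := by
  obtain ⟨n, hn⟩ := h
  match n, hn with
  | 0, hn => exact absurd hn hx
  | n+1, hn => exact ⟨n, by rwa [Function.iterate_succ_apply] at hn⟩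

lemma parent_not_mem_desc {u : T.V} (hu : u ≠ T.root) : T.parent u ∉ T.Desc u := by
  rintro ⟨n, hn⟩
  have : T.parent^[n+1] u = u := by rwa [Function.iterate_succ_apply]
  exact Nat.succ_ne_zero n (no_cycle hu this)

lemma not_mem_desc_child {u c : T.V} (hc : T.IsChild c u) : u ∉ T.Desc c := by
  rintro ⟨n, hn⟩
  rcases eq_or_ne u T.root with hr | hr
  · subst hr
    rw [root_iterate] at hn
    exact hc.1 hn.symm
  · have : T.parent^[n+1] u = u := by
      rw [Function.iterate_succ_apply', hn, hc.2]
    exact Nat.succ_ne_zero n (no_cycle hr this)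

lemma exists_child_desc {u x : T.V} (h : x ∈ T.Desc u) (hx : x ≠ u) :
    ∃ c, T.IsChild c u ∧ x ∈ T.Desc c := by
  classical
  have hex : ∃ n, T.parent^[n] x = u := h
  set n := Nat.find hex with hndef
  have hn : T.parent^[n] x = u := Nat.find_spec hex
  have hn0 : n ≠ 0 := by
    intro h0; rw [h0] at hn; exact hx hn
  obtain ⟨m, hm⟩ := Nat.exists_eq_succ_of_ne_zero hn0
  refine ⟨T.parent^[m] x, ⟨?_, ?_⟩, ⟨m, rfl⟩⟩
  · intro hroot
    have hur : u = T.root := by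
      rw [hm, Function.iterate_succ_apply', hroot, T.parent_root] at hn
      exact hn.symm
    have : m < n := by omega
    exact absurd (by rw [hroot, hur]) (Nat.find_min hex this)
  · show T.parent (T.parent^[m] x) = u
    rw [← Function.iterate_succ_apply' T.parent m x, ← hm, hn]

lemma siblings_desc_disjoint {u c c' : T.V} (hc : T.IsChild c u) (hc' : T.IsChild c' u)
    (hne : c ≠ c') : ∀ x, x ∈ T.Desc c → x ∈ T.Desc c' → False := by
  have key : ∀ c c' : T.V, T.IsChild c u → T.IsChild c' u → c ≠ c' →
      ∀ n m, n ≤ m → ∀ x, T.parent^[n] x = c → T.parent^[m] x = c' → False := by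
    intro c c' hc hc' hne n m hnm x hn hm
    have h1 : T.parent^[m - n] c = c' := by
      rw [← hn, ← Function.iterate_add_apply]
      rw [(by omega : m - n + n = m)]; exact hm
    rcases Nat.eq_or_lt_of_le hnm with heq | hlt
    · rw [heq, Nat.sub_self] at h1; exact hne h1
    · have hpos : 1 ≤ m - n := by omega
      have h2 : T.parent^[m - n - 1] u = c' := by
        rw [← hc.2, ← Function.iterate_succ_apply]
        rw [(by omega : (m - n - 1).succ = m - n)]; exact h1
      rcases eq_or_ne u T.root with hr | hr
      · rw [hr, root_iterate] at h2; exact hc'.1 h2.symm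
      · have h3 : T.parent^[m - n] u = u := by
          rw [(by omega : m - n = 1 + (m - n - 1)), Function.iterate_add_apply, h2, ← hc'.2]
          rfl
        have := no_cycle hr h3; omega
  rintro x ⟨n, hn⟩ ⟨m, hm⟩
  rcases le_total n m with hnm | hmn
  · exact key c c' hc hc' hne n m hnm x hn hm
  · exact key c' c hc' hc hne.symm m n hmn x hm hn

-- Automorphism lemmas
lemma aut_mem_iff {a : Equiv.Perm T.V} : a ∈ T.Aut ↔ IsHom T T ⇑a := Iff.rfl

lemma aut_root {a : Equiv.Perm T.V} (ha : a ∈ T.Aut) : a T.root = T.root := ha.1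

lemma aut_ne_root {a : Equiv.Perm T.V} (ha : a ∈ T.Aut) {x : T.V} (hx : x ≠ T.root) :
    a x ≠ T.root := (ha.2 x hx).1

lemma aut_parent {a : Equiv.Perm T.V} (ha : a ∈ T.Aut) {x : T.V} (hx : x ≠ T.root) :
    T.parent (a x) = a (T.parent x) := (ha.2 x hx).2

lemma aut_desc {a : Equiv.Perm T.V} (ha : a ∈ T.Aut) {u x : T.V} (h : x ∈ T.Desc u) :
    a x ∈ T.Desc (a u) := by
  obtain ⟨n, hn⟩ := h
  induction n generalizing x with
  | zero => rw [show x = u from hn]; exact mem_desc_self _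
  | succ n ih =>
    rcases eq_or_ne x T.root with hr | hr
    · subst hr
      have : u = T.root := by
        rw [← hn, Function.iterate_succ_apply, T.parent_root, root_iterate]
      rw [this, aut_root ha, desc_root]; trivial
    · have h1 := ih (x := T.parent x) (by rwa [Function.iterate_succ_apply] at hn)
      have hp : T.parent (a x) = a (T.parent x) := aut_parent ha hr
      exact child_closed (by rwa [hp])

lemma fix_off_maps_into {f : T.V → T.V} (hinj : Function.Injective f) {A : Set T.V}
    (hfix : ∀ x ∉ A, f x = x) : ∀ x ∈ A, f x ∈ A := by
  intro x hx
  by_contra hfx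
  have h1 := hfix (f x) hfx
  have h2 : f x = x := hinj h1
  rw [h2] at hfx
  exact hfx hx

lemma inv_fix_off {a : Equiv.Perm T.V} {A : Set T.V} (hfix : ∀ x ∉ A, a x = x) :
    ∀ x ∉ A, a⁻¹ x = x := by
  intro x hx
  have := hfix x hx
  exact a.injective (by rw [Equiv.Perm.inv_def, Equiv.apply_symm_apply, this])

lemma aut_fix_support {a : Equiv.Perm T.V} (ha : a ∈ T.Aut) {u : T.V} (hu : u ≠ T.root)
    (hs : ∀ w ∉ T.Desc u, a w = w) : a u = u := by
  have hau : a u ∈ T.Desc u := fix_off_maps_into a.injective hs u (mem_desc_self u)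
  by_contra hne
  have h1 : T.parent (a u) ∈ T.Desc u := parent_mem_desc hau hne
  have h2 : T.parent (a u) = a (T.parent u) := aut_parent ha hu
  have h3 : a (T.parent u) = T.parent u := hs _ (parent_not_mem_desc hu)
  rw [h2, h3] at h1
  exact parent_not_mem_desc hu h1

lemma aut_desc_inv {a : Equiv.Perm T.V} (ha : a ∈ T.Aut) {u x : T.V}
    (h : a x ∈ T.Desc (a u)) : x ∈ T.Desc u := by
  have := aut_desc (T.Aut.inv_mem ha) (u := a u) (x := a x) h
  simpa using this

-- iterates of automorphisms
lemma aut_iterate_ne_root {a : Equiv.Perm T.V} (ha : a ∈ T.Aut) {x : T.V} (hx : x ≠ T.root) :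
    ∀ i, (⇑a)^[i] x ≠ T.root := by
  intro i
  induction i with
  | zero => exact hx
  | succ i ih => rw [Function.iterate_succ_apply']; exact aut_ne_root ha ih

lemma aut_iterate_parent {a : Equiv.Perm T.V} (ha : a ∈ T.Aut) {x : T.V} (hx : x ≠ T.root) :
    ∀ i, T.parent ((⇑a)^[i] x) = (⇑a)^[i] (T.parent x) := by
  intro i
  induction i with
  | zero => rfl
  | succ i ih =>
    rw [Function.iterate_succ_apply', Function.iterate_succ_apply',
      aut_parent ha (aut_iterate_ne_root ha hx i), ih]

lemma aut_iterate_desc {a : Equiv.Perm T.V} (ha : a ∈ T.Aut) {u x : T.V} (h : x ∈ T.Desc u) :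
    ∀ i, (⇑a)^[i] x ∈ T.Desc ((⇑a)^[i] u) := by
  intro i
  induction i with
  | zero => exact h
  | succ i ih =>
    rw [Function.iterate_succ_apply', Function.iterate_succ_apply']
    exact aut_desc ha ih

lemma aut_iterate_fix {a : Equiv.Perm T.V} {x : T.V} (h : a x = x) :
    ∀ i, (⇑a)^[i] x = x := by
  intro i
  induction i with
  | zero => rfl
  | succ i ih => rw [Function.iterate_succ_apply', ih, h]

lemma inv_iterate_iterate {a : Equiv.Perm T.V} (i : ℕ) (x : T.V) :
    (⇑a⁻¹)^[i] ((⇑a)^[i] x) = x := by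
  induction i generalizing x with
  | zero => rfl
  | succ i ih =>
    rw [Function.iterate_succ_apply (⇑a⁻¹), Function.iterate_succ_apply' (⇑a),
      show ∀ y, a⁻¹ (a y) = y from fun y => a.symm_apply_apply y]
    exact ih x

lemma iterate_inv_iterate {a : Equiv.Perm T.V} (i : ℕ) (x : T.V) :
    (⇑a)^[i] ((⇑a⁻¹)^[i] x) = x := by
  have := inv_iterate_iterate (a := a⁻¹) i x
  simpa using this

-- restriction lemma
lemma restrict_aut {a : Equiv.Perm T.V} (ha : a ∈ T.Aut) (B : Set T.V)
    (hB1 : ∀ x ∈ B, a x ∈ B)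
    (hB2 : ∀ x, T.parent x ∈ B → x ∈ B)
    (hB3 : T.root ∉ B)
    (hB4 : ∀ x ∈ B, T.parent x ∉ B → a (T.parent x) = T.parent x) :
    ∃ b ∈ T.Aut, (∀ x ∈ B, b x = a x) ∧ (∀ x ∉ B, b x = x) := by
  classical
  set f : T.V → T.V := fun x => if x ∈ B then a x else x with hf
  have hfB : ∀ x ∈ B, f x = a x := fun x hx => by simp [hf, hx]
  have hfnB : ∀ x ∉ B, f x = x := fun x hx => by simp [hf, hx]
  have hinj : Function.Injective f := by
    intro x y hxy
    by_cases hx : x ∈ B <;> by_cases hy : y ∈ B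
    · rw [hfB x hx, hfB y hy] at hxy; exact a.injective hxy
    · rw [hfB x hx, hfnB y hy] at hxy; exact absurd (hxy ▸ hB1 x hx) hy
    · rw [hfnB x hx, hfB y hy] at hxy; exact absurd (hxy ▸ hB1 y hy) hx
    · rw [hfnB x hx, hfnB y hy] at hxy; exact hxy
  have hbij : Function.Bijective f := Finite.injective_iff_bijective.mp hinj
  refine ⟨Equiv.ofBijective f hbij, ⟨?_, ?_⟩, fun x hx => hfB x hx, fun x hx => hfnB x hx⟩
  · show f T.root = T.root
    exact hfnB _ hB3
  · intro v hv
    show f v ≠ T.root ∧ T.parent (f v) = f (T.parent v)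
    by_cases hvB : v ∈ B
    · rw [hfB v hvB]
      refine ⟨aut_ne_root ha hv, ?_⟩
      rw [aut_parent ha hv]
      by_cases hp : T.parent v ∈ B
      · rw [hfB _ hp]
      · rw [hfnB _ hp, hB4 v hvB hp]
    · rw [hfnB v hvB]
      have hp : T.parent v ∉ B := fun h => hvB (hB2 v h)
      rw [hfnB _ hp]
      exact ⟨hv, rfl⟩

lemma disjoint_support_commute {a b : Equiv.Perm T.V} {A B : Set T.V}
    (hAB : ∀ x, x ∈ A → x ∈ B → False)
    (ha : ∀ x ∉ A, a x = x) (hb : ∀ x ∉ B, b x = x) : a * b = b * a := by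
  ext x
  simp only [Equiv.Perm.mul_apply]
  by_cases hx : x ∈ A
  · have hxB : x ∉ B := fun h => hAB x hx h
    have hax : a x ∈ A := fix_off_maps_into a.injective ha x hx
    rw [hb x hxB, hb (a x) (fun h => hAB _ hax h)]
  · by_cases hx' : x ∈ B
    · have hbx : b x ∈ B := fix_off_maps_into b.injective hb x hx'
      rw [ha x hx, ha (b x) (fun h => hAB _ h hbx)]
    · rw [hb x hx', ha x hx, hb x hx']

lemma key (T : FRTree) : ∀ (n : ℕ) (u : T.V), (T.Desc u).ncard ≤ n →
    ∀ g ∈ T.Aut, (∀ w ∉ T.Desc u, g w = w) →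
    ∃ t ∈ T.Aut, (∀ w ∉ T.Desc u, t w = w) ∧ t * g * t⁻¹ = g⁻¹ := by
  intro n
  induction n with
  | zero =>
    intro u hcard
    exfalso
    have h1 : (T.Desc u).ncard = 0 := Nat.le_zero.mp hcard
    have h2 : T.Desc u = ∅ := (Set.ncard_eq_zero (Set.toFinite _)).mp h1
    exact absurd (mem_desc_self u) (h2 ▸ Set.notMem_empty u)
  | succ n IH =>
    intro u hcard g hg hgsupp
    -- the inner induction on finsets of children
    have inner : ∀ (m : ℕ) (C : Finset T.V), C.card ≤ m → (∀ c ∈ C, T.IsChild c u) →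
        ∀ g₁ ∈ T.Aut, (∀ c ∈ C, g₁ c ∈ C) →
        (∀ w : T.V, (∀ c ∈ C, w ∉ T.Desc c) → g₁ w = w) →
        ∃ t ∈ T.Aut, (∀ w : T.V, (∀ c ∈ C, w ∉ T.Desc c) → t w = w) ∧
          t * g₁ * t⁻¹ = g₁⁻¹ := by
      intro m
      induction m with
      | zero =>
        intro C hC _ g₁ _ _ hsupp
        have hCempty : C = ∅ := Finset.card_eq_zero.mp (Nat.le_zero.mp hC)
        subst hCempty
        have hg1 : g₁ = 1 := Equiv.ext fun x => hsupp x (by simp)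
        exact ⟨1, T.Aut.one_mem, fun w _ => rfl, by simp [hg1]⟩
      | succ m IHC =>
        intro C hC hchild g₁ hg₁ hginv hsupp
        by_cases hCm : C.card ≤ m
        · exact IHC C hCm hchild g₁ hg₁ hginv hsupp
        -- C is nonempty
        have hCne : C.Nonempty := Finset.card_pos.mp (by omega)
        obtain ⟨v, hvC⟩ := hCne
        have hv : T.IsChild v u := hchild v hvC
        -- g₁ fixes u
        have hgu : g₁ u = u := by
          rcases eq_or_ne u T.root with hr | hr
          · rw [hr]; exact aut_root hg₁
          · refine aut_fix_support hg₁ hr fun w hw => hsupp w fun c hc => ?_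
            intro hwc
            exact hw (desc_mono ⟨1, by simp [(hchild c hc).2]⟩ hwc)
        classical
        -- the orbit of v among the children
        set k := Function.minimalPeriod (⇑g₁) v with hkdef
        have hk0 : 0 < k := by
          refine Function.IsPeriodicPt.minimalPeriod_pos (orderOf_pos g₁) ?_
          show (⇑g₁)^[orderOf g₁] v = v
          rw [Equiv.Perm.iterate_eq_pow, pow_orderOf_eq_one]; rfl
        have hkv : (⇑g₁)^[k] v = v := Function.iterate_minimalPeriod
        have hinjk : Set.InjOn (fun i => (⇑g₁)^[i] v) (Set.Iio k) :=
          Function.iterate_injOn_Iio_minimalPeriod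
        have hmod : ∀ i : ℕ, (⇑g₁)^[i % k] v = (⇑g₁)^[i] v := fun i =>
          Function.iterate_mod_minimalPeriod_eq
        -- orbit points are children in C
        have horb : ∀ i : ℕ, T.IsChild ((⇑g₁)^[i] v) u ∧ (⇑g₁)^[i] v ∈ C := by
          intro i
          induction i with
          | zero => exact ⟨hv, hvC⟩
          | succ i ih =>
            rw [Function.iterate_succ_apply']
            have h1 := hchild _ (hginv _ ih.2)
            exact ⟨h1, hginv _ ih.2⟩
        set O : Finset T.V := (Finset.range k).image (fun i => (⇑g₁)^[i] v) with hOdef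
        have hOmem : ∀ c : T.V, c ∈ O ↔ ∃ i, i < k ∧ c = (⇑g₁)^[i] v := by
          intro c
          simp only [hOdef, Finset.mem_image, Finset.mem_range]
          constructor
          · rintro ⟨i, hi, rfl⟩; exact ⟨i, hi, rfl⟩
          · rintro ⟨i, hi, rfl⟩; exact ⟨i, hi, rfl⟩
        have hvO : v ∈ O := (hOmem v).mpr ⟨0, hk0, rfl⟩
        have hOC : O ⊆ C := by
          intro c hc
          obtain ⟨i, _, rfl⟩ := (hOmem c).mp hc
          exact (horb i).2
        -- uniqueness of the orbit index
        have huniq : ∀ i j : ℕ, i < k → j < k → ∀ x : T.V,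
            x ∈ T.Desc ((⇑g₁)^[i] v) → x ∈ T.Desc ((⇑g₁)^[j] v) → i = j := by
          intro i j hi hj x hxi hxj
          by_contra hij
          have hne : (⇑g₁)^[i] v ≠ (⇑g₁)^[j] v := fun h => hij (hinjk hi hj h)
          exact siblings_desc_disjoint (horb i).1 (horb j).1 hne x hxi hxj
        -- the support sets
        set SO : Set T.V := {x | ∃ i, i < k ∧ x ∈ T.Desc ((⇑g₁)^[i] v)} with hSOdef
        set SC : Set T.V := {x | ∃ c, c ∈ C \ O ∧ x ∈ T.Desc c} with hSCdef
        have hSO_child : ∀ x : T.V, T.parent x ∈ SO → x ∈ SO := by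
          rintro x ⟨i, hi, hx⟩; exact ⟨i, hi, child_closed hx⟩
        have hSC_child : ∀ x : T.V, T.parent x ∈ SC → x ∈ SC := by
          rintro x ⟨c, hc, hx⟩; exact ⟨c, hc, child_closed hx⟩
        have hSO_root : T.root ∉ SO := by
          rintro ⟨i, hi, hx⟩; exact (horb i).1.1 (root_mem_desc hx)
        have hSC_root : T.root ∉ SC := by
          rintro ⟨c, hc, hx⟩
          exact (hchild c (Finset.mem_sdiff.mp hc).1).1 (root_mem_desc hx)
        have hu_notSO : u ∉ SO := by
          rintro ⟨i, hi, hx⟩; exact not_mem_desc_child (horb i).1 hx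
        have hu_notSC : u ∉ SC := by
          rintro ⟨c, hc, hx⟩
          exact not_mem_desc_child (hchild c (Finset.mem_sdiff.mp hc).1) hx
        have hdisj : ∀ x : T.V, x ∈ SO → x ∈ SC → False := by
          rintro x ⟨i, hi, hxi⟩ ⟨c, hc, hxc⟩
          obtain ⟨hcC, hcO⟩ := Finset.mem_sdiff.mp hc
          have hne : (⇑g₁)^[i] v ≠ c := by
            rintro rfl; exact hcO ((hOmem _).mpr ⟨i, hi, rfl⟩)
          exact siblings_desc_disjoint (horb i).1 (hchild c hcC) hne x hxi hxc
        -- invariance of the supports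
        have hSO_inv : ∀ x ∈ SO, g₁ x ∈ SO := by
          rintro x ⟨i, hi, hx⟩
          refine ⟨(i+1) % k, Nat.mod_lt _ hk0, ?_⟩
          rw [hmod (i+1), Function.iterate_succ_apply']
          exact aut_desc hg₁ hx
        have hCO_inv : ∀ c ∈ C \ O, g₁ c ∈ C \ O := by
          intro c hc
          obtain ⟨hcC, hcO⟩ := Finset.mem_sdiff.mp hc
          refine Finset.mem_sdiff.mpr ⟨hginv c hcC, fun hgO => ?_⟩
          obtain ⟨j, hj, hgj⟩ := (hOmem _).mp hgO
          have : c ∈ O := by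
            rcases Nat.eq_zero_or_pos j with rfl | hjpos
            · have : g₁ c = g₁ ((⇑g₁)^[k-1] v) := by
                rw [hgj]
                show (⇑g₁)^[0] v = g₁ ((⇑g₁)^[k-1] v)
                rw [← Function.iterate_succ_apply' (⇑g₁) (k-1) v]
                rw [(by omega : (k-1).succ = k), hkv]
                rfl
              have hck : c = (⇑g₁)^[k-1] v := g₁.injective this
              exact (hOmem c).mpr ⟨k-1, by omega, hck⟩
            · have : g₁ c = g₁ ((⇑g₁)^[j-1] v) := by
                rw [hgj, ← Function.iterate_succ_apply' (⇑g₁) (j-1) v]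
                rw [(by omega : (j-1).succ = j)]
              have hck : c = (⇑g₁)^[j-1] v := g₁.injective this
              exact (hOmem c).mpr ⟨j-1, by omega, hck⟩
          exact hcO this
        have hSC_inv : ∀ x ∈ SC, g₁ x ∈ SC := by
          rintro x ⟨c, hc, hx⟩
          exact ⟨g₁ c, hCO_inv c hc, aut_desc hg₁ hx⟩
        -- restriction of g₁ to SO and SC
        obtain ⟨gO, hgOAut, hgOon, hgOoff⟩ := restrict_aut hg₁ SO hSO_inv hSO_child hSO_root
          (by
            rintro x ⟨i, hi, hx⟩ hpx
            have hxv : x = (⇑g₁)^[i] v := by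
              by_contra hne
              exact hpx ⟨i, hi, parent_mem_desc hx hne⟩
            rw [hxv, aut_iterate_parent hg₁ hv.1 i, hv.2, aut_iterate_fix hgu, hgu])
        obtain ⟨g', hg'Aut, hg'on, hg'off⟩ := restrict_aut hg₁ SC hSC_inv hSC_child hSC_root
          (by
            rintro x ⟨c, hc, hx⟩ hpx
            have hcC := (Finset.mem_sdiff.mp hc).1
            have hxv : x = c := by
              by_contra hne
              exact hpx ⟨c, hc, parent_mem_desc hx hne⟩
            rw [hxv, (hchild c hcC).2] at hpx ⊢
            exact hgu)
        -- g₁ splits as gO * g'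
        have hsplit : g₁ = gO * g' := by
          ext x
          simp only [Equiv.Perm.mul_apply]
          by_cases hxO : x ∈ SO
          · have hxC : x ∉ SC := fun h => hdisj x hxO h
            rw [hg'off x hxC, hgOon x hxO]
          · by_cases hxC : x ∈ SC
            · rw [hg'on x hxC]
              have : g₁ x ∈ SC := hSC_inv x hxC
              rw [hgOoff _ (fun h => hdisj _ h this)]
            · rw [hg'off x hxC, hgOoff x hxO]
              refine hsupp x fun c hc hxc => ?_
              by_cases hcO : c ∈ O
              · obtain ⟨i, hi, rfl⟩ := (hOmem c).mp hcO
                exact hxO ⟨i, hi, hxc⟩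
              · exact hxC ⟨c, Finset.mem_sdiff.mpr ⟨hc, hcO⟩, hxc⟩
        -- inner IH applied to g' on C \ O
        have hCO_lt : (C \ O).card ≤ m := by
          have : C \ O ⊂ C := by
            refine Finset.ssubset_iff_of_subset (Finset.sdiff_subset) |>.mpr ?_
            exact ⟨v, hvC, fun h => (Finset.mem_sdiff.mp h).2 hvO⟩
          have := Finset.card_lt_card this
          omega
        obtain ⟨t', ht'Aut, ht'supp0, ht'conj⟩ := IHC (C \ O) hCO_lt
          (fun c hc => hchild c (Finset.mem_sdiff.mp hc).1) g' hg'Aut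
          (fun c hc => by
            have h1 : c ∈ SC := ⟨c, hc, mem_desc_self c⟩
            rw [hg'on c h1]; exact hCO_inv c hc)
          (fun w hw => hg'off w fun ⟨c, hc, hwc⟩ => hw c hc hwc)
        have ht'supp : ∀ w ∉ SC, t' w = w := fun w hw =>
          ht'supp0 w fun c hc hwc => hw ⟨c, hc, hwc⟩
        -- restriction h of g₁^k to the subtree at v
        have hgku : (g₁ ^ k) u = u := by
          rw [← Equiv.Perm.iterate_eq_pow]; exact aut_iterate_fix hgu k
        have hgkAut : g₁ ^ k ∈ T.Aut := pow_mem hg₁ k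
        obtain ⟨h, hhAut, hhon, hhoff⟩ := restrict_aut hgkAut (T.Desc v)
          (by
            intro x hx
            show (g₁ ^ k) x ∈ T.Desc v
            rw [← Equiv.Perm.iterate_eq_pow]
            have := aut_iterate_desc hg₁ hx k
            rwa [hkv] at this)
          (fun x hx => child_closed hx)
          (fun hx => hv.1 (root_mem_desc hx))
          (by
            intro x hx hpx
            have hxv : x = v := by
              by_contra hne
              exact hpx (parent_mem_desc hx hne)
            rw [hxv, hv.2, hgku])
        -- outer IH applied to the subtree at v
        have hDvu : T.Desc v ⊂ T.Desc u := by
          constructor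
          · exact desc_mono ⟨1, by simp [hv.2]⟩
          · intro hsub
            exact not_mem_desc_child hv (hsub (mem_desc_self u))
        have hDvcard : (T.Desc v).ncard ≤ n := by
          have := Set.ncard_lt_ncard hDvu (Set.toFinite _)
          omega
        obtain ⟨s, hsAut, hssupp, hsconj⟩ := IH v hDvcard h hhAut hhoff
        have hsv : s v = v := aut_fix_support hsAut hv.1 hssupp
        have hg₁inv : g₁⁻¹ ∈ T.Aut := T.Aut.inv_mem hg₁
        have hginvu : g₁⁻¹ u = u := by
          conv_lhs => rw [← hgu]
          exact g₁.symm_apply_apply u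
        -- inverse iterates on the orbit
        have hinv_v : ∀ i, i ≤ k → (⇑g₁⁻¹)^[i] v = (⇑g₁)^[k - i] v := by
          intro i hi
          have h1 : (⇑g₁)^[i] ((⇑g₁)^[k - i] v) = v := by
            rw [← Function.iterate_add_apply, (by omega : i + (k - i) = k), hkv]
          calc (⇑g₁⁻¹)^[i] v = (⇑g₁⁻¹)^[i] ((⇑g₁)^[i] ((⇑g₁)^[k - i] v)) := by rw [h1]
            _ = (⇑g₁)^[k - i] v := inv_iterate_iterate i _
        set J : ℕ → ℕ := fun i => (k - i) % k with hJdef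
        have hJlt : ∀ i, J i < k := fun i => Nat.mod_lt _ hk0
        have hJv : ∀ i, i ≤ k → (⇑g₁⁻¹)^[i] v = (⇑g₁)^[J i] v := by
          intro i hi
          rw [hinv_v i hi, ← hmod (k - i)]
        have hJJ : ∀ i, i < k → J (J i) = i := by
          intro i hi
          simp only [hJdef]
          rcases Nat.eq_zero_or_pos i with rfl | hipos
          · simp [Nat.mod_self]
          · rw [Nat.mod_eq_of_lt (by omega : k - i < k)]
            rw [(by omega : k - (k - i) = i), Nat.mod_eq_of_lt hi]
        -- the reversal permutation on the orbit-subtrees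
        set f : T.V → T.V := fun x =>
          if hx : ∃ i, i < k ∧ x ∈ T.Desc ((⇑g₁)^[i] v) then
            (⇑g₁⁻¹)^[hx.choose] (s ((⇑g₁⁻¹)^[hx.choose] x))
          else x with hfdef
        have hfspec : ∀ i, i < k → ∀ x, x ∈ T.Desc ((⇑g₁)^[i] v) →
            f x = (⇑g₁⁻¹)^[i] (s ((⇑g₁⁻¹)^[i] x)) := by
          intro i hi x hx
          have hex : ∃ j, j < k ∧ x ∈ T.Desc ((⇑g₁)^[j] v) := ⟨i, hi, hx⟩
          have h1 : f x = (⇑g₁⁻¹)^[hex.choose] (s ((⇑g₁⁻¹)^[hex.choose] x)) := by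
            simp only [hfdef]
            rw [dif_pos hex]
          obtain ⟨hj1, hj2⟩ := hex.choose_spec
          rw [h1, huniq hex.choose i hj1 hi x hj2 hx]
        have hfoff : ∀ x ∉ SO, f x = x := by
          intro x hx
          simp only [hfdef]
          exact dif_neg hx
        -- where f sends points
        have hDvmem : ∀ i, i < k → ∀ x, x ∈ T.Desc ((⇑g₁)^[i] v) →
            (⇑g₁⁻¹)^[i] x ∈ T.Desc v := by
          intro i hi x hx
          have := aut_iterate_desc hg₁inv hx i
          rwa [inv_iterate_iterate] at this
        have hsDv : ∀ y ∈ T.Desc v, s y ∈ T.Desc v :=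
          fix_off_maps_into s.injective hssupp
        have himg : ∀ i, i < k → ∀ x, x ∈ T.Desc ((⇑g₁)^[i] v) →
            f x ∈ T.Desc ((⇑g₁)^[J i] v) := by
          intro i hi x hx
          rw [hfspec i hi x hx]
          have h1 : s ((⇑g₁⁻¹)^[i] x) ∈ T.Desc v := hsDv _ (hDvmem i hi x hx)
          have h2 := aut_iterate_desc hg₁inv h1 i
          rwa [hJv i (le_of_lt hi)] at h2
        have himgSO : ∀ x ∈ SO, f x ∈ SO := by
          rintro x ⟨i, hi, hx⟩
          exact ⟨J i, hJlt i, himg i hi x hx⟩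
        -- f is injective
        have hfinj : Function.Injective f := by
          intro x y hxy
          by_cases hx : x ∈ SO
          · by_cases hy : y ∈ SO
            · obtain ⟨i, hi, hxd⟩ := hx
              obtain ⟨j, hj, hyd⟩ := hy
              have hJeq : J i = J j :=
                huniq (J i) (J j) (hJlt i) (hJlt j) (f x)
                  (himg i hi x hxd) (hxy ▸ himg j hj y hyd)
              have hij : i = j := by
                have := congrArg J hJeq
                rwa [hJJ i hi, hJJ j hj] at this
              subst hij
              rw [hfspec i hi x hxd, hfspec i hi y hyd] at hxy
              have h1 := (g₁⁻¹ : Equiv.Perm T.V).injective.iterate i hxy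
              have h2 := s.injective h1
              exact (g₁⁻¹ : Equiv.Perm T.V).injective.iterate i h2
            · exact absurd ((hfoff y hy) ▸ hxy ▸ himgSO x hx) hy
          · by_cases hy : y ∈ SO
            · exact absurd ((hfoff x hx) ▸ hxy.symm ▸ himgSO y hy) hx
            · rw [hfoff x hx, hfoff y hy] at hxy; exact hxy
        set tO : Equiv.Perm T.V := Equiv.ofBijective f
          (Finite.injective_iff_bijective.mp hfinj) with htOdef
        have htO_apply : ∀ x, tO x = f x := fun x => rfl
        have htOoff : ∀ x ∉ SO, tO x = x := fun x hx => hfoff x hx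
        -- tO is an automorphism
        have hu_fix : f u = u := hfoff u hu_notSO
        have htOAut : tO ∈ T.Aut := by
          refine ⟨hfoff _ hSO_root, ?_⟩
          intro x hx
          show f x ≠ T.root ∧ T.parent (f x) = f (T.parent x)
          by_cases hxO : x ∈ SO
          · obtain ⟨i, hi, hxd⟩ := hxO
            constructor
            · intro hroot
              have := himg i hi x hxd
              rw [hroot] at this
              exact (horb (J i)).1.1 (root_mem_desc this)
            · by_cases hxv : x = (⇑g₁)^[i] v
              · subst hxv
                have h1 : f ((⇑g₁)^[i] v) = (⇑g₁⁻¹)^[i] v := by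
                  rw [hfspec i hi _ (mem_desc_self _), inv_iterate_iterate, hsv]
                have h2 : T.parent ((⇑g₁)^[i] v) = u := by
                  rw [aut_iterate_parent hg₁ hv.1 i, hv.2, aut_iterate_fix hgu]
                rw [h1, h2, hu_fix]
                rw [aut_iterate_parent hg₁inv hv.1 i, hv.2]
                exact aut_iterate_fix hginvu i
              · have hpx : T.parent x ∈ T.Desc ((⇑g₁)^[i] v) := parent_mem_desc hxd hxv
                rw [hfspec i hi x hxd, hfspec i hi _ hpx]
                have hxr : (⇑g₁⁻¹)^[i] x ≠ T.root := aut_iterate_ne_root hg₁inv hx i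
                have hsr : s ((⇑g₁⁻¹)^[i] x) ≠ T.root := aut_ne_root hsAut hxr
                rw [aut_iterate_parent hg₁inv hsr i, aut_parent hsAut hxr,
                  aut_iterate_parent hg₁inv hx i]
          · have hpxO : T.parent x ∉ SO := fun hp => hxO (hSO_child x hp)
            rw [hfoff x hxO, hfoff _ hpxO]
            exact ⟨hx, rfl⟩
        -- inverse of gO on SO
        have hginvSO : ∀ y ∈ SO, g₁⁻¹ y ∈ SO := by
          rintro y ⟨i, hi, hy⟩
          have h1 := aut_desc hg₁inv hy
          rcases Nat.eq_zero_or_pos i with rfl | hipos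
          · have h2 : g₁⁻¹ ((⇑g₁)^[0] v) = (⇑g₁)^[k-1] v := by
              show g₁⁻¹ v = (⇑g₁)^[k-1] v
              conv_lhs => rw [← hkv, (by omega : k = (k-1).succ),
                Function.iterate_succ_apply' (⇑g₁) (k-1) v]
              exact g₁.symm_apply_apply _
            rw [h2] at h1
            exact ⟨k-1, by omega, h1⟩
          · have h2 : g₁⁻¹ ((⇑g₁)^[i] v) = (⇑g₁)^[i-1] v := by
              conv_lhs => rw [(by omega : i = (i-1).succ),
                Function.iterate_succ_apply' (⇑g₁) (i-1) v]
              exact g₁.symm_apply_apply _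
            rw [h2] at h1
            exact ⟨i-1, by omega, h1⟩
        have hgOinv_on : ∀ y ∈ SO, gO⁻¹ y = g₁⁻¹ y := by
          intro y hy
          have h1 : gO (g₁⁻¹ y) = y := by
            rw [hgOon _ (hginvSO y hy)]
            exact g₁.apply_symm_apply y
          calc gO⁻¹ y = gO⁻¹ (gO (g₁⁻¹ y)) := by rw [h1]
            _ = g₁⁻¹ y := gO.symm_apply_apply _
        have hgOinv_off : ∀ y ∉ SO, gO⁻¹ y = y := inv_fix_off hgOoff
        -- inverse of h on the subtree at v
        have hkinv_v : (⇑g₁⁻¹)^[k] v = v := by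
          rw [hinv_v k le_rfl, Nat.sub_self]
          rfl
        have hhinv : ∀ y ∈ T.Desc v, h⁻¹ y = (⇑g₁⁻¹)^[k] y := by
          intro y hy
          have h2 : (⇑g₁⁻¹)^[k] y ∈ T.Desc v := by
            have := aut_iterate_desc hg₁inv hy k
            rwa [hkinv_v] at this
          have h3 : h ((⇑g₁⁻¹)^[k] y) = y := by
            rw [hhon _ h2, ← Equiv.Perm.iterate_eq_pow, iterate_inv_iterate]
          calc h⁻¹ y = h⁻¹ (h ((⇑g₁⁻¹)^[k] y)) := by rw [h3]
            _ = (⇑g₁⁻¹)^[k] y := h.symm_apply_apply _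
        have hsh : s * h = h⁻¹ * s := by
          rw [← hsconj, inv_mul_cancel_right]
        -- the key pointwise conjugation identity
        have hpt : ∀ x, f (gO x) = gO⁻¹ (f x) := by
          intro x
          by_cases hxO : x ∈ SO
          · obtain ⟨i, hi, hxd⟩ := hxO
            have hxSO : x ∈ SO := ⟨i, hi, hxd⟩
            have hgOx : gO x = g₁ x := hgOon x hxSO
            have hgx_mem : g₁ x ∈ T.Desc ((⇑g₁)^[i+1] v) := by
              rw [Function.iterate_succ_apply']
              exact aut_desc hg₁ hxd
            have hRHS : gO⁻¹ (f x) = g₁⁻¹ ((⇑g₁⁻¹)^[i] (s ((⇑g₁⁻¹)^[i] x))) := by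
              rw [hgOinv_on _ (himgSO x hxSO), hfspec i hi x hxd]
            rcases lt_or_ge (i+1) k with hik | hik
            · rw [hgOx, hfspec (i+1) hik _ hgx_mem, hRHS]
              rw [Function.iterate_succ_apply (⇑g₁⁻¹) i (g₁ x), show ∀ y, g₁⁻¹ (g₁ y) = y from fun y => g₁.symm_apply_apply y,
                ← Function.iterate_succ_apply' (⇑g₁⁻¹) i]
            · have hik' : i + 1 = k := by omega
              have hgx_v : g₁ x ∈ T.Desc ((⇑g₁)^[0] v) := by
                show g₁ x ∈ T.Desc v
                rw [hik'] at hgx_mem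
                rwa [hkv] at hgx_mem
              set w := (⇑g₁⁻¹)^[i] x with hwdef
              have hw : w ∈ T.Desc v := hDvmem i hi x hxd
              have hxw : (⇑g₁)^[i] w = x := iterate_inv_iterate i x
              have hgxh : g₁ x = h w := by
                rw [hhon w hw, ← Equiv.Perm.iterate_eq_pow]
                rw [← hxw, ← Function.iterate_succ_apply' (⇑g₁) i w,
                  (show i.succ = k from hik')]
              have hLHS : f (gO x) = (⇑g₁⁻¹)^[k] (s w) := by
                rw [hgOx, hfspec 0 hk0 _ hgx_v]
                simp only [Function.iterate_zero_apply]
                rw [hgxh]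
                have : s (h w) = (s * h) w := rfl
                rw [this, hsh]
                have : (h⁻¹ * s) w = h⁻¹ (s w) := rfl
                rw [this, hhinv _ (hsDv w hw)]
              rw [hLHS, hRHS, ← Function.iterate_succ_apply' (⇑g₁⁻¹) i,
                (show i.succ = k from hik')]
          · rw [hgOoff x hxO, hfoff x hxO, hgOinv_off x hxO]
        have htOconj : tO * gO * tO⁻¹ = gO⁻¹ := by
          have h1 : tO * gO = gO⁻¹ * tO := by
            ext x
            simp only [Equiv.Perm.mul_apply]
            exact hpt x
          rw [h1, mul_inv_cancel_right]
        -- assembling the conjugator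
        refine ⟨tO * t', mul_mem htOAut ht'Aut, ?_, ?_⟩
        · intro w hw
          have hwSO : w ∉ SO := by
            rintro ⟨i, hi, hx⟩
            exact hw _ (hOC ((hOmem _).mpr ⟨i, hi, rfl⟩)) hx
          have hwSC : w ∉ SC := by
            rintro ⟨c, hc, hx⟩
            exact hw c (Finset.mem_sdiff.mp hc).1 hx
          show tO (t' w) = w
          rw [ht'supp w hwSC, htO_apply, hfoff w hwSO]
        · have c1 : t' * gO = gO * t' :=
            disjoint_support_commute (fun x h1 h2 => hdisj x h2 h1) ht'supp hgOoff
          have c2 : Commute gO g' := disjoint_support_commute hdisj hgOoff hg'off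
          have c3 : Commute tO g' := disjoint_support_commute hdisj htOoff hg'off
          have c1' : ∀ z : Equiv.Perm T.V, t' * (gO * z) = gO * (t' * z) := fun z => by
            rw [← mul_assoc, c1, mul_assoc]
          have d1 : ∀ z : Equiv.Perm T.V, t' * (g' * (t'⁻¹ * z)) = g'⁻¹ * z := fun z => by
            rw [← mul_assoc, ← mul_assoc, ht'conj]
          have d2 : ∀ z : Equiv.Perm T.V, tO * (gO * (tO⁻¹ * z)) = gO⁻¹ * z := fun z => by
            rw [← mul_assoc, ← mul_assoc, htOconj]
          have e3 : g'⁻¹ * tO⁻¹ = tO⁻¹ * g'⁻¹ := (c3.inv_inv.symm).eq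
          rw [hsplit]
          simp only [mul_inv_rev, mul_assoc]
          rw [c1' (g' * (t'⁻¹ * tO⁻¹)), d1 tO⁻¹]
          rw [show gO * (g'⁻¹ * tO⁻¹) = gO * (tO⁻¹ * g'⁻¹) by rw [e3]]
          rw [show tO * (gO * (tO⁻¹ * g'⁻¹)) = gO⁻¹ * g'⁻¹ from d2 g'⁻¹]
          exact (c2.inv_inv).eq
    -- apply inner with C = children of u
    have hgu : g u = u := by
      rcases eq_or_ne u T.root with hr | hr
      · rw [hr]; exact aut_root hg
      · exact aut_fix_support hg hr hgsupp
    have hchild : ∀ c ∈ T.children u, T.IsChild c u := by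
      intro c hc
      exact (Finset.mem_filter.mp hc).2
    have hmemch : ∀ c : T.V, T.IsChild c u → c ∈ T.children u := by
      intro c hc
      exact Finset.mem_filter.mpr ⟨Finset.mem_univ c, hc⟩
    obtain ⟨t, htAut, htsupp, htconj⟩ := inner (T.children u).card (T.children u) le_rfl
      hchild g hg
      (fun c hc => by
        have h1 := hchild c hc
        refine hmemch _ ⟨aut_ne_root hg h1.1, ?_⟩
        rw [aut_parent hg h1.1, h1.2, hgu])
      (fun w hw => by
        by_cases hwu : w ∈ T.Desc u
        · rcases eq_or_ne w u with rfl | hne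
          · exact hgu
          · obtain ⟨c, hc, hwc⟩ := exists_child_desc hwu hne
            exact absurd hwc (hw c (hmemch c hc))
        · exact hgsupp w hwu)
    refine ⟨t, htAut, fun w hw => ?_, htconj⟩
    refine htsupp w fun c hc hwc => ?_
    exact hw (desc_mono ⟨1, by simp [(hchild c hc).2]⟩ hwc)

end AmbivAux

/-- **Corollary.**  The group `Aut T` is ambivalent: every automorphism of a finite
rooted tree is conjugate in `Aut T` to its inverse. -/
theorem aut_ambivalent (T : FRTree) (g : Equiv.Perm T.V) (hg : g ∈ T.Aut) :
    ∃ t ∈ T.Aut, t * g * t⁻¹ = g⁻¹ := by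
  obtain ⟨t, htAut, _, htconj⟩ := AmbivAux.key T (T.Desc T.root).ncard T.root le_rfl g hg
    (fun w hw => absurd (by rw [AmbivAux.desc_root]; trivial) hw)
  exact ⟨t, htAut, htconj⟩
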